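/- For every s ∈ H_1(K_b): θ_{1,b}(s) ∈ im(ψ_{b−1}) if and only if s ∈ im(φ_{b−1}). Consequently, the canonical ℤ/2-linear map H_1(K_b)/im(φ_{b−1}) → H_1(K̃_b)/im(ψ_{b−1}) induced by θ_{1,b} is injective. -/

import Mathlib

/-- An abstract simplicial complex on a vertex type `α`: a collection of nonempty
finite subsets of `α` closed under passing to nonempty subsets. -/
structure AbsSC (α : Type) where
  faces : Set (Finset α)
  not_empty_mem : ∅ ∉ faces
  down_closed : ∀ {s t : Finset α}, s ∈ faces → t ⊆ s → t.Nonempty → t ∈ faces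

namespace AbsSC

variable {α : Type}

/-- The vertex set of an abstract simplicial complex. -/
def vertexSet (K : AbsSC α) : Set α := {v | {v} ∈ K.faces}

/-- The type of `q`-simplices (faces with `q+1` vertices). -/
def simplices (K : AbsSC α) (q : ℕ) : Type :=
  {s : Finset α // s ∈ K.faces ∧ s.card = q + 1}

/-- The space of `q`-chains over `ℤ/2`: formal sums of `q`-simplices. -/
abbrev Chain (K : AbsSC α) (q : ℕ) : Type := K.simplices q →₀ ZMod 2

/-- The sum of the `q`-dimensional faces of a `(q+1)`-simplex. -/
noncomputable def faceChain (K : AbsSC α) (q : ℕ) (s : K.simplices (q + 1)) : K.Chain q :=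
  ∑ t ∈ (s.1.powersetCard (q + 1)).attach,
    Finsupp.single
      ⟨t.1, by
        obtain ⟨hsub, hcard⟩ := Finset.mem_powersetCard.mp t.2
        refine ⟨K.down_closed s.2.1 hsub ?_, hcard⟩
        rw [← Finset.card_pos, hcard]
        omega⟩
      (1 : ZMod 2)

/-- The boundary map `∂_{q+1} : C_{q+1}(K) → C_q(K)`, sending each `(q+1)`-simplex to
the sum of its `q`-dimensional faces. -/
noncomputable def boundary (K : AbsSC α) (q : ℕ) :
    K.Chain (q + 1) →ₗ[ZMod 2] K.Chain q :=
  Finsupp.lsum (ZMod 2) fun s => LinearMap.toSpanSingleton (ZMod 2) (K.Chain q) (K.faceChain q s)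

/-- The cycle subspace: `ker ∂_q` (all of `C_0` in degree `0`). -/
noncomputable def cycles (K : AbsSC α) : (q : ℕ) → Submodule (ZMod 2) (K.Chain q)
  | 0 => ⊤
  | q + 1 => LinearMap.ker (K.boundary q)

/-- The boundaries, viewed as a submodule of the cycles. -/
noncomputable def boundariesIn (K : AbsSC α) (q : ℕ) :
    Submodule (ZMod 2) (K.cycles q) :=
  Submodule.comap (K.cycles q).subtype (LinearMap.range (K.boundary q))

/-- The `q`-th simplicial homology over `ℤ/2`: `H_q(K) = ker ∂_q / im ∂_{q+1}`. -/
def Homology (K : AbsSC α) (q : ℕ) : Type :=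
  (K.cycles q) ⧸ (K.boundariesIn q)

noncomputable instance (K : AbsSC α) (q : ℕ) : AddCommGroup (K.Homology q) :=
  inferInstanceAs (AddCommGroup ((K.cycles q) ⧸ (K.boundariesIn q)))

noncomputable instance (K : AbsSC α) (q : ℕ) : Module (ZMod 2) (K.Homology q) :=
  inferInstanceAs (Module (ZMod 2) ((K.cycles q) ⧸ (K.boundariesIn q)))

/-- The homology class of a cycle. -/
noncomputable def hClass (K : AbsSC α) (q : ℕ) (c : K.Chain q) (hc : c ∈ K.cycles q) :
    K.Homology q :=
  Submodule.Quotient.mk ⟨c, hc⟩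

/-- The chain map induced by an inclusion of simplicial complexes. -/
noncomputable def chainMap (K L : AbsSC α) (h : K.faces ⊆ L.faces) (q : ℕ) :
    K.Chain q →ₗ[ZMod 2] L.Chain q :=
  Finsupp.lmapDomain (ZMod 2) (ZMod 2) fun s : K.simplices q =>
    (⟨s.1, h s.2.1, s.2.2⟩ : L.simplices q)

/-- `θ` is the map on `q`-th homology induced by the inclusion `K ⊆ L`: it sends the
class of every cycle `c` of `K` to the class of the image chain of `c` in `L`. -/
def InducedHom (K L : AbsSC α) (q : ℕ)
    (θ : K.Homology q →ₗ[ZMod 2] L.Homology q) : Prop :=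
  ∃ h : K.faces ⊆ L.faces,
    ∀ (c : K.Chain q) (hc : c ∈ K.cycles q),
      ∃ hc' : chainMap K L h q c ∈ L.cycles q,
        θ (K.hClass q c hc) = L.hClass q (chainMap K L h q c) hc'

end AbsSC

/-- The faces of the gluing stars `S = S_1 ⊔ ⋯ ⊔ S_k`: for each `j`, the vertex `{z j}`,
the vertices `{v}` for `v ∈ P j`, and the edges `{z j, v}` for `v ∈ P j`. -/
def starFaces {α : Type} [DecidableEq α] {k : ℕ} (P : Fin k → Set α) (z : Fin k → α) :
    Set (Finset α) :=
  {s | ∃ j : Fin k, s = {z j} ∨ ∃ v ∈ P j, s = {v} ∨ s = {z j, v}}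

section Tower

variable {W : ℕ → Type} [∀ i, AddCommGroup (W i)] [∀ i, Module (ZMod 2) (W i)]

/-- The composite `φ_{i,j} = φ_{j-1} ∘ ⋯ ∘ φ_i` of the connecting maps of a tower
(the identity when `i = j`). -/
noncomputable def comps (φ : ∀ i, W i →ₗ[ZMod 2] W (i + 1)) {i j : ℕ} (h : i ≤ j) :
    W i →ₗ[ZMod 2] W j :=
  Nat.leRecOn (C := fun m => W i →ₗ[ZMod 2] W m) h (fun {m} g => (φ m).comp g) LinearMap.id

/-- `s ∈ W b` has persistence interval `(b, d)` with finite death `d ∈ {b+1, …, n}`: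
`s ∉ im φ_{b-1}`, `φ_{b,d'}(s) ∉ im φ_{b-1,d'}` for all `b ≤ d' < d`, and
`φ_{b,d}(s) ∈ im φ_{b-1,d}`. -/
def HasPersIntervalFin (φ : ∀ i, W i →ₗ[ZMod 2] W (i + 1)) (n b d : ℕ) (s : W b) : Prop :=
  ∃ (_ : 1 ≤ b) (hbd : b < d) (_ : d ≤ n),
    s ∉ LinearMap.range (comps φ (Nat.sub_le b 1)) ∧
    (∀ (d' : ℕ) (hd' : b ≤ d'), d' < d →
      comps φ hd' s ∉ LinearMap.range (comps φ (Nat.le_trans (Nat.sub_le b 1) hd'))) ∧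
    comps φ (Nat.le_of_lt hbd) s ∈
      LinearMap.range (comps φ (Nat.le_trans (Nat.sub_le b 1) (Nat.le_of_lt hbd)))

/-- `s ∈ W b` has persistence interval `(b, ∞)`: `s ∉ im φ_{b-1}` and
`φ_{b,d'}(s) ∉ im φ_{b-1,d'}` for all `b ≤ d' ≤ n`. -/
def HasPersIntervalInf (φ : ∀ i, W i →ₗ[ZMod 2] W (i + 1)) (n b : ℕ) (s : W b) : Prop :=
  ∃ _ : 1 ≤ b,
    s ∉ LinearMap.range (comps φ (Nat.sub_le b 1)) ∧
    ∀ (d' : ℕ) (hd' : b ≤ d'), d' ≤ n →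
      comps φ hd' s ∉ LinearMap.range (comps φ (Nat.le_trans (Nat.sub_le b 1) hd'))

end Tower

namespace AbsSC
variable {α : Type}

lemma chainMap_single (K L : AbsSC α) (h : K.faces ⊆ L.faces) (q : ℕ)
    (s : K.simplices q) (a : ZMod 2) :
    chainMap K L h q (Finsupp.single s a)
      = Finsupp.single ⟨s.1, h s.2.1, s.2.2⟩ a := by
  exact Finsupp.mapDomain_single

lemma chainMap_injective (K L : AbsSC α) (h : K.faces ⊆ L.faces) (q : ℕ) :
    Function.Injective (chainMap K L h q) := by
  have : Function.Injective (fun s : K.simplices q => (⟨s.1, h s.2.1, s.2.2⟩ : L.simplices q)) := by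
    intro a b hab
    exact Subtype.ext (by simpa using congrArg Subtype.val hab)
  intro x y hxy
  exact Finsupp.mapDomain_injective this hxy

lemma chainMap_apply_mem (K L : AbsSC α) (h : K.faces ⊆ L.faces) (q : ℕ)
    (c : K.Chain q) (s : K.simplices q) :
    chainMap K L h q c ⟨s.1, h s.2.1, s.2.2⟩ = c s := by
  have hinj : Function.Injective (fun s : K.simplices q => (⟨s.1, h s.2.1, s.2.2⟩ : L.simplices q)) := by
    intro a b hab
    exact Subtype.ext (by simpa using congrArg Subtype.val hab)
  exact Finsupp.mapDomain_apply hinj c s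

lemma chainMap_apply_not_mem (K L : AbsSC α) (h : K.faces ⊆ L.faces) (q : ℕ)
    (c : K.Chain q) (t : L.simplices q) (ht : t.1 ∉ K.faces) :
    chainMap K L h q c t = 0 := by
  apply Finsupp.mapDomain_notin_range
  rintro ⟨s, hs⟩
  exact ht (hs ▸ s.2.1)

lemma boundary_single (K : AbsSC α) (q : ℕ) (s : K.simplices (q+1)) (a : ZMod 2) :
    K.boundary q (Finsupp.single s a) = a • K.faceChain q s := by
  simp [boundary]

end AbsSC

namespace AbsSC
variable {α : Type}

lemma chainMap_faceChain (K L : AbsSC α) (h : K.faces ⊆ L.faces) (q : ℕ)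
    (s : K.simplices (q+1)) :
    chainMap K L h q (K.faceChain q s) = L.faceChain q ⟨s.1, h s.2.1, s.2.2⟩ := by
  unfold faceChain
  rw [map_sum]
  refine Finset.sum_congr rfl ?_
  intro t ht
  exact chainMap_single K L h q _ 1

lemma boundary_chainMap (K L : AbsSC α) (h : K.faces ⊆ L.faces) (q : ℕ) (c : K.Chain (q+1)) :
    L.boundary q (chainMap K L h (q+1) c) = chainMap K L h q (K.boundary q c) := by
  induction c using Finsupp.induction_linear with
  | zero => simp
  | add f g hf hg => simp [map_add, hf, hg]
  | single s a =>
      rw [chainMap_single]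
      refine (boundary_single L q _ a).trans ?_
      rw [boundary_single, map_smul, chainMap_faceChain]

lemma chainMap_mem_cycles (K L : AbsSC α) (h : K.faces ⊆ L.faces)
    (c : K.Chain 1) (hc : c ∈ K.cycles 1) :
    chainMap K L h 1 c ∈ L.cycles 1 := by
  change _ ∈ LinearMap.ker (L.boundary 0)
  change c ∈ LinearMap.ker (K.boundary 0) at hc
  rw [LinearMap.mem_ker] at hc ⊢
  rw [boundary_chainMap, hc, map_zero]

lemma chainMap_comp (J K L : AbsSC α) (h1 : J.faces ⊆ K.faces) (h2 : K.faces ⊆ L.faces)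
    (h3 : J.faces ⊆ L.faces) (q : ℕ) (c : J.Chain q) :
    chainMap K L h2 q (chainMap J K h1 q c) = chainMap J L h3 q c := by
  induction c using Finsupp.induction_linear with
  | zero => simp
  | add f g hf hg => simp [map_add, hf, hg]
  | single s a =>
    rw [chainMap_single]
    exact (chainMap_single K L h2 q _ a).trans (chainMap_single J L h3 q s a).symm

lemma exists_preimage (K L : AbsSC α) (h : K.faces ⊆ L.faces) (q : ℕ) (c : L.Chain q)
    (hc : ∀ t ∈ c.support, (t : L.simplices q).1 ∈ K.faces) :
    ∃ c' : K.Chain q, chainMap K L h q c' = c := by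
  refine ⟨∑ t ∈ c.support.attach, Finsupp.single ⟨t.1.1, hc t.1 t.2, t.1.2.2⟩ (c t.1), ?_⟩
  rw [map_sum]
  refine (Finset.sum_congr rfl fun t _ => chainMap_single K L h q _ _).trans ?_
  trans (∑ t ∈ c.support.attach, Finsupp.single t.1 (c t.1))
  · exact Finset.sum_congr rfl fun t ht =>
      congrArg (fun u : L.simplices q => Finsupp.single u (c t.1)) (Subtype.ext rfl)
  · rw [Finset.sum_attach c.support (fun t => Finsupp.single t (c t))]
    exact Finsupp.sum_single c

end AbsSC

lemma comps_one {W : ℕ → Type} [∀ i, AddCommGroup (W i)] [∀ i, Module (ZMod 2) (W i)]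
    (φ : ∀ i, W i →ₗ[ZMod 2] W (i + 1)) (m : ℕ) :
    comps φ (Nat.sub_le (m + 1) 1) = φ m := by
  unfold comps
  rw [Nat.leRecOn_succ (Nat.le_refl m), Nat.leRecOn_self]
  ext x
  rfl

lemma neg_eq_self_zmod2 {M : Type*} [AddCommGroup M] [Module (ZMod 2) M] (x : M) : -x = x := by
  have h : x + x = 0 := by
    rw [← two_smul (ZMod 2) x, show (2 : ZMod 2) = 0 from rfl, zero_smul]
  exact neg_eq_of_add_eq_zero_left h

lemma starFaces_card_le {α : Type} [DecidableEq α] {k : ℕ} (P : Fin k → Set α) (z : Fin k → α)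
    {s : Finset α} (hs : s ∈ starFaces P z) : s.card ≤ 2 := by
  obtain ⟨j, h | ⟨v, hv, h | h⟩⟩ := hs <;> subst h
  · simp
  · simp
  · exact (Finset.card_insert_le _ _).trans (by simp)

lemma starFaces_two {α : Type} [DecidableEq α] {k : ℕ} (P : Fin k → Set α) (z : Fin k → α)
    {s : Finset α} (hs : s ∈ starFaces P z) (h2 : s.card = 2) : ∃ j, z j ∈ s := by
  obtain ⟨j, h | ⟨v, hv, h | h⟩⟩ := hs <;> subst h
  · simp at h2
  · simp at h2
  · exact ⟨j, by simp⟩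

/-- for every `s ∈ H_1(K_b)`, `θ_{1,b}(s) ∈ im ψ_{b-1}` if and only if
`s ∈ im φ_{b-1}`; consequently, the canonical `ℤ/2`-linear map
`H_1(K_b)/im φ_{b-1} → H_1(K̃_b)/im ψ_{b-1}` induced by `θ_{1,b}` is injective. -/
theorem stmt14 {α : Type} [DecidableEq α] (n k : ℕ)
    (K Kt : ℕ → AbsSC α)
    (hK0 : (K 0).faces = ∅)
    (hKt0 : (Kt 0).faces = ∅)
    (hKmono : ∀ i, i < n → (K i).faces ⊆ (K (i + 1)).faces)
    (hKtmono : ∀ i, i < n → (Kt i).faces ⊆ (Kt (i + 1)).faces)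
    (P : Fin k → Set α)
    (hPne : ∀ j, (P j).Nonempty)
    (hPdisj : Pairwise (Function.onFun Disjoint P))
    (hPunion : (⋃ j, P j) = (K 1).vertexSet)
    (z : Fin k → α)
    (hzinj : Function.Injective z)
    (hznew : ∀ (j : Fin k) (i : ℕ), i ≤ n → z j ∉ (K i).vertexSet)
    (hKt : ∀ i, 1 ≤ i → i ≤ n → (Kt i).faces = (K i).faces ∪ starFaces P z)
    (φ : ∀ i : ℕ, (K i).Homology 1 →ₗ[ZMod 2] (K (i + 1)).Homology 1)
    (ψ : ∀ i : ℕ, (Kt i).Homology 1 →ₗ[ZMod 2] (Kt (i + 1)).Homology 1)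
    (θ : ∀ i : ℕ, (K i).Homology 1 →ₗ[ZMod 2] (Kt i).Homology 1)
    (hφ : ∀ i, i < n → AbsSC.InducedHom (K i) (K (i + 1)) 1 (φ i))
    (hψ : ∀ i, i < n → AbsSC.InducedHom (Kt i) (Kt (i + 1)) 1 (ψ i))
    (hθ : ∀ i, i ≤ n → AbsSC.InducedHom (K i) (Kt i) 1 (θ i))
    (hsq : ∀ i, i < n → (θ (i + 1)).comp (φ i) = (ψ i).comp (θ i))
    (b : ℕ) (hb1 : 1 ≤ b) (hbn : b ≤ n) :
    (∀ s : (K b).Homology 1,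
      θ b s ∈ LinearMap.range (comps ψ (Nat.sub_le b 1)) ↔
        s ∈ LinearMap.range (comps φ (Nat.sub_le b 1))) ∧
    (∀ Θ : ((K b).Homology 1 ⧸ LinearMap.range (comps φ (Nat.sub_le b 1))) →ₗ[ZMod 2]
        ((Kt b).Homology 1 ⧸ LinearMap.range (comps ψ (Nat.sub_le b 1))),
      (∀ s : (K b).Homology 1,
        Θ (Submodule.Quotient.mk s) = Submodule.Quotient.mk (θ b s)) →
      Function.Injective Θ) := by
  obtain ⟨m, rfl⟩ : ∃ m, b = m + 1 := ⟨b - 1, by omega⟩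
  have hmn : m < n := by omega
  have hmln : m ≤ n := le_of_lt hmn
  rw [comps_one φ m, comps_one ψ m]
  obtain ⟨hθsub, hθprop⟩ := hθ (m + 1) hbn
  obtain ⟨hψsub, hψprop⟩ := hψ m hmn
  obtain ⟨hφsub, hφprop⟩ := hφ m hmn
  have hsubm : (K m).faces ⊆ (Kt m).faces := by
    rcases Nat.eq_zero_or_pos m with h0 | h1
    · subst h0; rw [hK0]; exact Set.empty_subset _
    · rw [hKt m h1 hmln]; exact Set.subset_union_left
  have main : ∀ s : (K (m + 1)).Homology 1,
      θ (m + 1) s ∈ LinearMap.range (ψ m) ↔ s ∈ LinearMap.range (φ m) := by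
    intro s
    constructor
    · intro hmem
      obtain ⟨t, ht⟩ := hmem
      obtain ⟨⟨ct, hct⟩, rfl⟩ := Submodule.Quotient.mk_surjective _ t
      obtain ⟨⟨c, hc⟩, rfl⟩ := Submodule.Quotient.mk_surjective _ s
      obtain ⟨hctc, hψeq⟩ := hψprop ct hct
      obtain ⟨hcc, hθeq⟩ := hθprop c hc
      -- equality of classes in H_1(Kt (m+1))
      have heq : (Kt (m+1)).hClass 1 (AbsSC.chainMap (Kt m) (Kt (m+1)) hψsub 1 ct) hctc
          = (Kt (m+1)).hClass 1 (AbsSC.chainMap (K (m+1)) (Kt (m+1)) hθsub 1 c) hcc := by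
        rw [← hψeq, ← hθeq]; exact ht
      rw [AbsSC.hClass, AbsSC.hClass] at heq
      replace heq := (Submodule.Quotient.eq (p := (Kt (m+1)).boundariesIn 1)).mp heq
      rw [AbsSC.boundariesIn,
        Submodule.mem_comap, LinearMap.mem_range] at heq
      obtain ⟨D, hD⟩ := heq
      have hD' : (Kt (m+1)).boundary 1 D
          = AbsSC.chainMap (Kt m) (Kt (m+1)) hψsub 1 ct
            - AbsSC.chainMap (K (m+1)) (Kt (m+1)) hθsub 1 c := by
        simpa using hD
      -- D comes from K (m+1)
      obtain ⟨D', hD'img⟩ := AbsSC.exists_preimage (K (m+1)) (Kt (m+1)) hθsub 2 D (by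
        intro u hu
        have hu1 : u.1 ∈ (K (m+1)).faces ∪ starFaces P z :=
          (hKt (m+1) hb1 hbn).subset u.2.1
        rcases hu1 with h | h
        · exact h
        · have := starFaces_card_le P z h
          rw [u.2.2] at this
          omega)
      have hbd : (Kt (m+1)).boundary 1 D
          = AbsSC.chainMap (K (m+1)) (Kt (m+1)) hθsub 1 ((K (m+1)).boundary 1 D') := by
        rw [← hD'img, AbsSC.boundary_chainMap]
      set w : (K (m+1)).Chain 1 := (K (m+1)).boundary 1 D' + c with hw
      have hctw : AbsSC.chainMap (Kt m) (Kt (m+1)) hψsub 1 ct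
          = AbsSC.chainMap (K (m+1)) (Kt (m+1)) hθsub 1 w := by
        rw [hw, map_add, ← hbd, hD']
        abel
      -- support of ct lies in K m
      have hsupp : ∀ u ∈ ct.support, (u : (Kt m).simplices 1).1 ∈ (K m).faces := by
        intro u hu
        have hne : ct u ≠ 0 := Finsupp.mem_support_iff.mp hu
        have hval : AbsSC.chainMap (Kt m) (Kt (m+1)) hψsub 1 ct
            ⟨u.1, hψsub u.2.1, u.2.2⟩ = ct u := AbsSC.chainMap_apply_mem _ _ _ _ _ _
        have humem : u.1 ∈ (K (m+1)).faces := by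
          by_contra hnot
          rw [hctw, AbsSC.chainMap_apply_not_mem (K (m+1)) (Kt (m+1)) hθsub 1 w
            ⟨u.1, hψsub u.2.1, u.2.2⟩ hnot] at hval
          exact hne hval.symm
        rcases Nat.eq_zero_or_pos m with h0 | h1
        · exfalso
          subst h0
          exact Set.notMem_empty _ (hKt0.subset u.2.1)
        have hu1 : u.1 ∈ (K m).faces ∪ starFaces P z := (hKt m h1 hmln).subset u.2.1
        rcases hu1 with h | h
        · exact h
        · exfalso
          obtain ⟨j, hj⟩ := starFaces_two P z h u.2.2
          have : ({z j} : Finset α) ∈ (K (m+1)).faces :=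
            (K (m+1)).down_closed humem (Finset.singleton_subset_iff.mpr hj) ⟨z j, by simp⟩
          exact hznew j (m+1) hbn this
      obtain ⟨ct', hct'⟩ := AbsSC.exists_preimage (K m) (Kt m) hsubm 1 ct hsupp
      -- ct' is a cycle
      have hcyc : ct' ∈ (K m).cycles 1 := by
        change ct' ∈ LinearMap.ker ((K m).boundary 0)
        rw [LinearMap.mem_ker]
        apply AbsSC.chainMap_injective (K m) (Kt m) hsubm 0
        rw [← AbsSC.boundary_chainMap, hct', map_zero]
        have := hct
        change ct ∈ LinearMap.ker ((Kt m).boundary 0) at this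
        rw [LinearMap.mem_ker] at this
        exact this
      -- chainMap ct' = w in K (m+1)
      have hkey : AbsSC.chainMap (K m) (K (m+1)) hφsub 1 ct' = w := by
        apply AbsSC.chainMap_injective (K (m+1)) (Kt (m+1)) hθsub 1
        rw [← hctw, ← hct',
          AbsSC.chainMap_comp (K m) (Kt m) (Kt (m+1)) hsubm hψsub
            (fun x hx => hψsub (hsubm hx)) 1,
          AbsSC.chainMap_comp (K m) (K (m+1)) (Kt (m+1)) hφsub hθsub
            (fun x hx => hθsub (hφsub hx)) 1]
      obtain ⟨hctc', hφeq⟩ := hφprop ct' hcyc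
      refine ⟨Submodule.Quotient.mk ⟨ct', hcyc⟩, ?_⟩
      have : φ m ((K m).hClass 1 ct' hcyc)
          = (K (m+1)).hClass 1 (AbsSC.chainMap (K m) (K (m+1)) hφsub 1 ct') hctc' := hφeq
      rw [AbsSC.hClass, AbsSC.hClass] at this
      rw [show (Submodule.Quotient.mk ⟨ct', hcyc⟩ : (K m).Homology 1)
        = (K m).hClass 1 ct' hcyc from rfl, hφeq]
      rw [AbsSC.hClass]
      refine (Submodule.Quotient.eq (p := (K (m+1)).boundariesIn 1)).mpr ?_
      rw [AbsSC.boundariesIn, Submodule.mem_comap, LinearMap.mem_range]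
      refine ⟨D', ?_⟩
      have hsub : (AbsSC.chainMap (K m) (K (m+1)) hφsub 1 ct') - c
          = (K (m+1)).boundary 1 D' := by
        rw [hkey, hw]; abel
      simpa using hsub.symm
    · rintro ⟨x, rfl⟩
      exact ⟨θ m x, by rw [← LinearMap.comp_apply, ← hsq m hmn]; rfl⟩
  refine ⟨main, ?_⟩
  intro Θ hΘ x y hxy
  obtain ⟨sx, rfl⟩ := Submodule.Quotient.mk_surjective _ x
  obtain ⟨sy, rfl⟩ := Submodule.Quotient.mk_surjective _ y
  rw [hΘ sx, hΘ sy, Submodule.Quotient.eq] at hxy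
  rw [Submodule.Quotient.eq]
  have : θ (m+1) (sx - sy) ∈ LinearMap.range (ψ m) := by
    rw [map_sub]; exact hxy
  exact (main (sx - sy)).mp this
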